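/- Let A be an m × n integer matrix, b ∈ ℤ^m, and let k ≥ 0 be an integer. Suppose the system Ax = b has a [p_k]-adic solution, and every [p_k]-adic solution of Ax = b has full support (all n entries nonzero). Then for every x̄ ∈ ℤ^n with Ax̄ = 0, every nonzero entry x̄_i of x̄ has a prime factor greater than or equal to p_{k+1} (equivalently, a prime factor not among the first k primes). -/

import Mathlib

/-- A real number is `[p_k]`-adic (where `p_1 < p_2 < ⋯` are the primes) if it can be
written as `a / b` with `a` an integer and `b` a positive integer all of whose prime
factors are among the first `k` primes. For `k = 0` this means `b = 1`, i.e. integers. -/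
def IsPkAdic (k : ℕ) (x : ℝ) : Prop :=
  ∃ a : ℤ, ∃ b : ℕ, 0 < b ∧
    (∀ q : ℕ, q.Prime → q ∣ b → ∃ i < k, q = Nat.nth Nat.Prime i) ∧
    x = (a : ℝ) / (b : ℝ)

lemma isPkAdic_int (k : ℕ) (a : ℤ) : IsPkAdic k (a : ℝ) := by
  refine ⟨a, 1, one_pos, ?_, by norm_num⟩
  intro q hq hdvd
  exact absurd (Nat.dvd_one.1 hdvd) hq.ne_one

lemma isPkAdic_add {k : ℕ} {x y : ℝ} (hx : IsPkAdic k x) (hy : IsPkAdic k y) :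
    IsPkAdic k (x + y) := by
  obtain ⟨a1, b1, hb1, hp1, rfl⟩ := hx
  obtain ⟨a2, b2, hb2, hp2, rfl⟩ := hy
  refine ⟨a1 * b2 + a2 * b1, b1 * b2, Nat.mul_pos hb1 hb2, ?_, ?_⟩
  · intro q hq hdvd
    rcases (Nat.Prime.dvd_mul hq).1 hdvd with h | h
    · exact hp1 q hq h
    · exact hp2 q hq h
  · have h1 : (b1 : ℝ) ≠ 0 := Nat.cast_ne_zero.2 hb1.ne'
    have h2 : (b2 : ℝ) ≠ 0 := Nat.cast_ne_zero.2 hb2.ne'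
    field_simp
    push_cast; ring

lemma isPkAdic_mul {k : ℕ} {x y : ℝ} (hx : IsPkAdic k x) (hy : IsPkAdic k y) :
    IsPkAdic k (x * y) := by
  obtain ⟨a1, b1, hb1, hp1, rfl⟩ := hx
  obtain ⟨a2, b2, hb2, hp2, rfl⟩ := hy
  refine ⟨a1 * a2, b1 * b2, Nat.mul_pos hb1 hb2, ?_, ?_⟩
  · intro q hq hdvd
    rcases (Nat.Prime.dvd_mul hq).1 hdvd with h | h
    · exact hp1 q hq h
    · exact hp2 q hq h
  · push_cast; ring

lemma isPkAdic_div_smooth {k : ℕ} {x : ℝ} (hx : IsPkAdic k x) (c : ℤ) (hc : c ≠ 0)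
    (hsm : ∀ q : ℕ, q.Prime → (q : ℤ) ∣ c → ∃ i < k, q = Nat.nth Nat.Prime i) :
    IsPkAdic k (x / (c : ℝ)) := by
  obtain ⟨a, b, hb, hp, rfl⟩ := hx
  refine ⟨(if 0 ≤ c then a else -a), b * c.natAbs, ?_, ?_, ?_⟩
  · exact Nat.mul_pos hb (Int.natAbs_pos.2 hc)
  · intro q hq hdvd
    rcases (Nat.Prime.dvd_mul hq).1 hdvd with h | h
    · exact hp q hq h
    · exact hsm q hq (dvd_trans (Int.natCast_dvd_natCast.2 h) (Int.natAbs_dvd.2 dvd_rfl))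
  · have h1 : (b : ℝ) ≠ 0 := Nat.cast_ne_zero.2 hb.ne'
    have h2 : (c : ℝ) ≠ 0 := Int.cast_ne_zero.2 hc
    rcases le_or_gt 0 c with h | h
    · rw [if_pos h]
      push_cast
      rw [Nat.cast_natAbs, Int.cast_abs, abs_of_nonneg (by exact_mod_cast h : (0:ℝ) ≤ (c:ℝ)), div_div]
    · rw [if_neg (not_le.2 h)]
      push_cast
      rw [Nat.cast_natAbs, Int.cast_abs, abs_of_neg (by exact_mod_cast h : (c:ℝ) < 0)]
      field_simp

theorem stmt_16 (m n : ℕ) (A : Matrix (Fin m) (Fin n) ℤ) (b : Fin m → ℤ) (k : ℕ)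
    (hfeas : ∃ x : Fin n → ℝ, (∀ j, IsPkAdic k (x j)) ∧
      ∀ i, ∑ j, (A i j : ℝ) * x j = (b i : ℝ))
    (hfull : ∀ x : Fin n → ℝ,
      ((∀ j, IsPkAdic k (x j)) ∧ ∀ i, ∑ j, (A i j : ℝ) * x j = (b i : ℝ)) →
      ∀ j, x j ≠ 0) :
    ∀ x : Fin n → ℤ, (∀ i, ∑ j, A i j * x j = 0) →
      ∀ j, x j ≠ 0 → ∃ q : ℕ, q.Prime ∧ (q : ℤ) ∣ x j ∧ Nat.nth Nat.Prime k ≤ q := by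
  intro x hAx j hxj
  by_contra hcon
  push_neg at hcon
  -- every prime factor of x j is among the first k primes
  have hsm : ∀ q : ℕ, q.Prime → (q : ℤ) ∣ x j → ∃ i < k, q = Nat.nth Nat.Prime i := by
    intro q hq hdvd
    refine ⟨Nat.count Nat.Prime q, ?_, (Nat.nth_count hq).symm⟩
    by_contra hk
    push_neg at hk
    have hmono := (Nat.nth_le_nth Nat.infinite_setOf_prime).2 hk
    rw [Nat.nth_count hq] at hmono
    exact absurd (hcon q hq hdvd) (not_lt.2 hmono)
  obtain ⟨x0, hx0adic, hx0eq⟩ := hfeas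
  have hxjR : ((x j : ℤ) : ℝ) ≠ 0 := Int.cast_ne_zero.2 hxj
  set t : ℝ := -(x0 j) / ((x j : ℤ) : ℝ) with ht
  have htadic : IsPkAdic k t := by
    apply isPkAdic_div_smooth _ _ hxj hsm
    have := hx0adic j
    obtain ⟨a, bb, hbb, hpp, heq⟩ := this
    exact ⟨-a, bb, hbb, hpp, by rw [heq]; push_cast; ring⟩
  set x' : Fin n → ℝ := fun i => x0 i + t * ((x i : ℤ) : ℝ) with hx'
  have hx'adic : ∀ i, IsPkAdic k (x' i) := fun i =>
    isPkAdic_add (hx0adic i) (isPkAdic_mul htadic (isPkAdic_int k (x i)))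
  have hx'eq : ∀ i, ∑ l, (A i l : ℝ) * x' l = (b i : ℝ) := by
    intro i
    have h0 : ((∑ l, A i l * x l : ℤ) : ℝ) = 0 := by rw [hAx i]; norm_num
    push_cast at h0
    simp only [hx', mul_add, Finset.sum_add_distrib]
    rw [hx0eq i]
    have : ∑ l, (A i l : ℝ) * (t * (x l : ℝ)) = t * ∑ l, (A i l : ℝ) * (x l : ℝ) := by
      rw [Finset.mul_sum]; congr 1; ext l; ring
    rw [this, h0, mul_zero, add_zero]
  have := hfull x' ⟨hx'adic, hx'eq⟩ j
  apply this
  simp only [hx', ht]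
  field_simp
  ring
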